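/- For all natural numbers n and real x, y, the two-variable Legendre polynomial P_n(x,y) := ((-1)^n/√π) Σ_{r=0}^{⌊n/2⌋} Γ(n-r+1/2) x^(n-2r) (-y)^r / ((n-2r)! r!) equals the integral (1/(n! √π)) ∫_0^∞ e^{-s} s^{-1/2} H_n(-s x, -s y) ds. -/

import Mathlib

open Real Finset MeasureTheory

noncomputable def hermite2 (n : ℕ) (x y : ℝ) : ℝ :=
  (Nat.factorial n : ℝ) *
    ∑ r ∈ Finset.range (n / 2 + 1),
      x ^ (n - 2 * r) * y ^ r / ((Nat.factorial (n - 2 * r) : ℝ) * (Nat.factorial r : ℝ))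

noncomputable def legendre2 (n : ℕ) (x y : ℝ) : ℝ :=
  ((-1 : ℝ) ^ n / Real.sqrt Real.pi) *
    ∑ r ∈ Finset.range (n / 2 + 1),
      Real.Gamma ((n : ℝ) - r + 1 / 2) * x ^ (n - 2 * r) * (-y) ^ r /
        ((Nat.factorial (n - 2 * r) : ℝ) * (Nat.factorial r : ℝ))

theorem legendre2_integral_repr (n : ℕ) (x y : ℝ) :
    legendre2 n x y =
      (1 / ((Nat.factorial n : ℝ) * Real.sqrt Real.pi)) *
        ∫ s in Set.Ioi (0 : ℝ),
          Real.exp (-s) * s ^ (-(1 / 2) : ℝ) * hermite2 n (-s * x) (-s * y) := by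
  have hπ : Real.sqrt Real.pi ≠ 0 := ne_of_gt (Real.sqrt_pos.mpr Real.pi_pos)
  set d : ℕ → ℝ := fun r =>
    (Nat.factorial n : ℝ) * ((-1:ℝ)^(n - r) * x ^ (n - 2*r) * y ^ r /
      ((Nat.factorial (n - 2*r) : ℝ) * (Nat.factorial r : ℝ))) with hd
  have hmem : ∀ r ∈ Finset.range (n/2+1), r ≤ n ∧ 2*r ≤ n := by
    intro r hr
    have h1 : r ≤ n / 2 := Nat.lt_succ_iff.mp (Finset.mem_range.mp hr)
    have h2 : 2 * r ≤ n := by omega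
    exact ⟨by omega, h2⟩
  have hpos : ∀ r ∈ Finset.range (n/2+1), (0:ℝ) < (n:ℝ) - r + 1/2 := by
    intro r hr
    have := (hmem r hr).1
    have : (r:ℝ) ≤ n := by exact_mod_cast this
    linarith
  have hcong : Set.EqOn
      (fun s => Real.exp (-s) * s ^ (-(1/2 : ℝ)) * hermite2 n (-s*x) (-s*y))
      (fun s => ∑ r ∈ Finset.range (n/2+1),
          Real.exp (-s) * s ^ (((n:ℝ) - r + 1/2) - 1) * d r) (Set.Ioi 0) := by
    intro s hs
    have hs' : (0:ℝ) < s := hs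
    simp only [hermite2]
    rw [Finset.mul_sum, Finset.mul_sum]
    refine Finset.sum_congr rfl fun r hr => ?_
    obtain ⟨hrn, h2r⟩ := hmem r hr
    have hadd : n - 2*r + r = n - r := by omega
    have hsplit : (-s*x) ^ (n - 2*r) * (-s*y) ^ r
        = (-1:ℝ)^(n - r) * s^(n - r) * (x ^ (n - 2*r) * y ^ r) := by
      calc (-s*x) ^ (n - 2*r) * (-s*y) ^ r
          = ((-s)^(n-2*r) * (-s)^r) * (x^(n-2*r) * y^r) := by
            rw [mul_pow, mul_pow]; ring
        _ = (-s)^(n-r) * (x^(n-2*r) * y^r) := by rw [← pow_add, hadd]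
        _ = _ := by rw [neg_pow]
    have hrpow : s ^ (-(1/2 : ℝ)) * (s:ℝ)^(n - r)
        = s ^ (((n:ℝ) - r + 1/2) - 1) := by
      rw [← Real.rpow_natCast s (n - r), ← Real.rpow_add hs']
      congr 1
      rw [Nat.cast_sub hrn]
      ring
    simp only [hd]
    rw [← hrpow]
    linear_combination (Real.exp (-s) * s ^ (-(1/2:ℝ)) * (Nat.factorial n : ℝ) /
      ((Nat.factorial (n - 2*r) : ℝ) * (Nat.factorial r : ℝ))) * hsplit
  rw [MeasureTheory.setIntegral_congr_fun measurableSet_Ioi hcong]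
  rw [MeasureTheory.integral_finset_sum _ (fun r hr => by
    exact ((Real.GammaIntegral_convergent (hpos r hr)).mul_const (d r)))]
  have hterm : ∀ r ∈ Finset.range (n/2+1),
      (∫ s in Set.Ioi (0:ℝ), Real.exp (-s) * s ^ (((n:ℝ) - r + 1/2) - 1) * d r)
        = Real.Gamma ((n:ℝ) - r + 1/2) * d r := by
    intro r hr
    rw [MeasureTheory.integral_mul_const, ← Real.Gamma_eq_integral (hpos r hr)]
  rw [Finset.sum_congr rfl hterm]
  simp only [legendre2, Finset.mul_sum]
  refine Finset.sum_congr rfl fun r hr => ?_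
  obtain ⟨hrn, _⟩ := hmem r hr
  have hsign : ((-1:ℝ))^(n - r) * (-1:ℝ)^r = (-1:ℝ)^n := by
    rw [← pow_add, Nat.sub_add_cancel hrn]
  have hfac : (Nat.factorial n : ℝ) ≠ 0 := Nat.cast_ne_zero.mpr (Nat.factorial_ne_zero n)
  have hfac1 : (Nat.factorial (n - 2*r) : ℝ) ≠ 0 := Nat.cast_ne_zero.mpr (Nat.factorial_ne_zero _)
  have hfac2 : (Nat.factorial r : ℝ) ≠ 0 := Nat.cast_ne_zero.mpr (Nat.factorial_ne_zero _)
  have hr2 : ((-1:ℝ))^r * (-1)^r = 1 := by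
    rw [← pow_add, ← two_mul, pow_mul]; norm_num
  have h2 : ((-1:ℝ))^(n - r) = (-1)^n * (-1)^r := by
    rw [← hsign, mul_assoc, hr2, mul_one]
  simp only [hd, neg_pow y]
  rw [h2]
  field_simp
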